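/- (Abstract form of the upper bound on the infinite-time momentum.) Let E be a finite-dimensional complex inner product space, let m_i > 0 be real, and let A, V, P : E → E be self-adjoint linear maps with A and V positive semidefinite. Set H = A + (1/(2m_i))·P² + V. Let (Ψ_j) be an orthonormal basis of E with H Ψ_j = E_j Ψ_j for reals E_j, and let ψ be a unit vector with P ψ = p0 ψ and A ψ = 0 for a real p0. Define p_∞ = Σ_j |⟨ψ, Ψ_j⟩|² ⟨Ψ_j, P Ψ_j⟩. Then |p_∞| ≤ sqrt( p0² + 2 m_i ⟨ψ, V ψ⟩ ). -/

import Mathlib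

open scoped InnerProductSpace

/-- Abstract form of the upper bound on the infinite-time momentum: if
`H = A + (1/(2 m_i)) P² + V` with `A` and `V` positive semidefinite
self-adjoint, and the unit initial state `ψ` satisfies `P ψ = p0 ψ` and
`A ψ = 0`, then the diagonal-ensemble impurity momentum
`p_∞ = ∑_j |⟨ψ, Ψ_j⟩|² ⟨Ψ_j, P Ψ_j⟩` satisfies
`|p_∞| ≤ √(p0² + 2 m_i ⟨ψ, V ψ⟩)`. -/
theorem diagonal_ensemble_upper_bound
    {E : Type*} [NormedAddCommGroup E] [InnerProductSpace ℂ E]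
    [FiniteDimensional ℂ E]
    {ι : Type*} [Fintype ι]
    (m_i : ℝ) (hmi : 0 < m_i)
    (A V P H : E →ₗ[ℂ] E)
    (hA : LinearMap.IsSymmetric A)
    (hV : LinearMap.IsSymmetric V)
    (hP : LinearMap.IsSymmetric P)
    (hApos : ∀ Φ : E, 0 ≤ (⟪Φ, A Φ⟫_ℂ).re)
    (hVpos : ∀ Φ : E, 0 ≤ (⟪Φ, V Φ⟫_ℂ).re)
    (hH : H = A + ((1 / (2 * m_i) : ℝ) : ℂ) • (P ∘ₗ P) + V)
    (Ψ : OrthonormalBasis ι ℂ E) (Ej : ι → ℝ)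
    (hΨ : ∀ j, H (Ψ j) = (Ej j : ℂ) • Ψ j)
    (ψ : E) (hψ : ‖ψ‖ = 1) (p0 : ℝ)
    (hψ_P : P ψ = (p0 : ℂ) • ψ)
    (hψ_A : A ψ = 0) :
    |∑ j, ‖⟪ψ, Ψ j⟫_ℂ‖ ^ 2 * (⟪Ψ j, P (Ψ j)⟫_ℂ).re|
      ≤ Real.sqrt (p0 ^ 2 + 2 * m_i * (⟪ψ, V ψ⟫_ℂ).re) := by
  classical
  set w : ι → ℝ := fun j => ‖⟪ψ, Ψ j⟫_ℂ‖ ^ 2 with hw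
  set p : ι → ℝ := fun j => (⟪Ψ j, P (Ψ j)⟫_ℂ).re with hp
  have hw0 : ∀ j, 0 ≤ w j := fun j => by positivity
  have hψψ : ⟪ψ, ψ⟫_ℂ = 1 := by
    rw [inner_self_eq_norm_sq_to_K, hψ]; norm_num
  have hcc : ∀ j, ⟪ψ, Ψ j⟫_ℂ * ⟪Ψ j, ψ⟫_ℂ = ((w j : ℝ) : ℂ) := by
    intro j
    rw [← inner_conj_symm ψ (Ψ j), mul_comm, Complex.mul_conj,
      Complex.normSq_eq_norm_sq, ← norm_inner_symm]
  have hsum1 : ∑ j, w j = 1 := by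
    have h := Ψ.sum_inner_mul_inner ψ ψ
    rw [hψψ] at h
    have : ∑ j, ((w j : ℝ) : ℂ) = 1 := by rw [← h]; exact (Finset.sum_congr rfl fun j _ => (hcc j).symm)
    exact_mod_cast this
  -- energy of ψ
  have hEψ : (⟪ψ, H ψ⟫_ℂ).re = p0 ^ 2 / (2 * m_i) + (⟪ψ, V ψ⟫_ℂ).re := by
    have hPPψ : P (P ψ) = ((p0 ^ 2 : ℝ) : ℂ) • ψ := by
      rw [hψ_P, map_smul, hψ_P, smul_smul]; norm_cast; ring_nf
    rw [hH]
    simp only [LinearMap.add_apply, LinearMap.smul_apply, LinearMap.comp_apply, hψ_A, hPPψ,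
      inner_add_right, inner_zero_right, inner_smul_right, smul_smul, hψψ]
    push_cast
    simp [← Complex.ofReal_pow]
    ring
  -- H is symmetric
  have hHsym : H.IsSymmetric := by
    rw [hH]
    intro x y
    simp only [LinearMap.add_apply, LinearMap.smul_apply, LinearMap.comp_apply,
      inner_add_left, inner_add_right, inner_smul_left, inner_smul_right,
      hA x y, hV x y, Complex.conj_ofReal, hP (P x) y, hP x (P y)]
  -- energy expansion in basis
  have hEexp : (⟪ψ, H ψ⟫_ℂ).re = ∑ j, w j * Ej j := by
    have h := Ψ.sum_inner_mul_inner ψ (H ψ)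
    have h2 : ∀ j, ⟪ψ, Ψ j⟫_ℂ * ⟪Ψ j, H ψ⟫_ℂ = ((w j * Ej j : ℝ) : ℂ) := by
      intro j
      have : ⟪Ψ j, H ψ⟫_ℂ = ((Ej j : ℝ) : ℂ) * ⟪Ψ j, ψ⟫_ℂ := by
        rw [← hHsym (Ψ j) ψ, hΨ j, inner_smul_left]
        simp
      rw [this, ← mul_assoc, mul_comm (⟪ψ, Ψ j⟫_ℂ), mul_assoc, hcc j]
      push_cast; ring
    rw [← h, Finset.sum_congr rfl fun j _ => h2 j]
    rw [Complex.re_sum]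
    simp
  -- per-level bound
  have hlevel : ∀ j, p j ^ 2 ≤ 2 * m_i * Ej j := by
    intro j
    have hnorm : ‖Ψ j‖ = 1 := Ψ.orthonormal.1 j
    have hEj : Ej j = (⟪Ψ j, H (Ψ j)⟫_ℂ).re := by
      rw [hΨ j, inner_smul_right]
      simp [inner_self_eq_norm_sq_to_K, hnorm]
    have hPP : (⟪Ψ j, P (P (Ψ j))⟫_ℂ).re = ‖P (Ψ j)‖ ^ 2 := by
      rw [← hP (Ψ j) (P (Ψ j))]
      simp [inner_self_eq_norm_sq_to_K, ← Complex.ofReal_pow]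
    have hE_ge : ‖P (Ψ j)‖ ^ 2 / (2 * m_i) ≤ Ej j := by
      rw [hEj, hH]
      simp only [LinearMap.add_apply, LinearMap.smul_apply, LinearMap.comp_apply,
        inner_add_right, inner_smul_right, Complex.add_re]
      have : (((1 / (2 * m_i) : ℝ) : ℂ) * ⟪Ψ j, P (P (Ψ j))⟫_ℂ).re
          = (1 / (2 * m_i)) * ‖P (Ψ j)‖ ^ 2 := by
        rw [Complex.re_ofReal_mul, hPP]
      rw [this]
      have h1 := hApos (Ψ j)
      have h2 := hVpos (Ψ j)
      have : ‖P (Ψ j)‖ ^ 2 / (2 * m_i) = 1 / (2 * m_i) * ‖P (Ψ j)‖ ^ 2 := by ring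
      linarith
    have hpj : |p j| ≤ ‖P (Ψ j)‖ := by
      calc |p j| ≤ ‖⟪Ψ j, P (Ψ j)⟫_ℂ‖ := Complex.abs_re_le_norm _
        _ ≤ ‖Ψ j‖ * ‖P (Ψ j)‖ := norm_inner_le_norm _ _
        _ = ‖P (Ψ j)‖ := by rw [hnorm, one_mul]
    have : p j ^ 2 ≤ ‖P (Ψ j)‖ ^ 2 := by
      rw [← sq_abs]
      exact pow_le_pow_left₀ (abs_nonneg _) hpj 2
    have h2m : ‖P (Ψ j)‖ ^ 2 ≤ 2 * m_i * Ej j := by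
      rw [div_le_iff₀ (by positivity)] at hE_ge
      linarith
    linarith
  -- Cauchy–Schwarz on the sum
  have hCS : (∑ j, w j * p j) ^ 2 ≤ ∑ j, w j * p j ^ 2 := by
    have h := Finset.sum_mul_sq_le_sq_mul_sq Finset.univ
      (fun j => Real.sqrt (w j)) (fun j => Real.sqrt (w j) * p j)
    have e1 : ∀ j, Real.sqrt (w j) * (Real.sqrt (w j) * p j) = w j * p j := by
      intro j; rw [← mul_assoc, Real.mul_self_sqrt (hw0 j)]
    have e2 : ∀ j, Real.sqrt (w j) ^ 2 = w j := fun j => Real.sq_sqrt (hw0 j)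
    have e3 : ∀ j, (Real.sqrt (w j) * p j) ^ 2 = w j * p j ^ 2 := by
      intro j; rw [mul_pow, e2 j]
    calc (∑ j, w j * p j) ^ 2
        = (∑ j, Real.sqrt (w j) * (Real.sqrt (w j) * p j)) ^ 2 := by
          rw [Finset.sum_congr rfl fun j _ => (e1 j).symm]
      _ ≤ (∑ j, Real.sqrt (w j) ^ 2) * ∑ j, (Real.sqrt (w j) * p j) ^ 2 := h
      _ = (∑ j, w j) * ∑ j, w j * p j ^ 2 := by
          rw [Finset.sum_congr rfl fun j _ => e2 j, Finset.sum_congr rfl fun j _ => e3 j]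
      _ = ∑ j, w j * p j ^ 2 := by rw [hsum1, one_mul]
  have hfinal : (∑ j, w j * p j) ^ 2 ≤ p0 ^ 2 + 2 * m_i * (⟪ψ, V ψ⟫_ℂ).re := by
    calc (∑ j, w j * p j) ^ 2 ≤ ∑ j, w j * p j ^ 2 := hCS
      _ ≤ ∑ j, w j * (2 * m_i * Ej j) := by
          refine Finset.sum_le_sum fun j _ => ?_
          exact mul_le_mul_of_nonneg_left (hlevel j) (hw0 j)
      _ = 2 * m_i * ∑ j, w j * Ej j := by rw [Finset.mul_sum]; congr 1; ext j; ring
      _ = 2 * m_i * (p0 ^ 2 / (2 * m_i) + (⟪ψ, V ψ⟫_ℂ).re) := by rw [← hEexp, hEψ]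
      _ = p0 ^ 2 + 2 * m_i * (⟪ψ, V ψ⟫_ℂ).re := by field_simp
  exact Real.abs_le_sqrt hfinal
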